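/- Let the terminal sets be updated by Z_{f,k+1} = Z_{f,k} ⊕ A_K^{N_k − 1} W with Z_{f,k̄} = {0} at some index k̄, and suppose the horizon lengths N_i are strictly decreasing for i ≥ k̄ with N_{k̄} = N̄. Then Z_{f,k} ⊕ W ⊆ S(N̄) for every k > k̄, where S(N̄) = Σ_{i=0}^{N̄−1} A_K^i W. -/
import Mathlib


open Pointwise

/-- Terminal set containment: with Z_{f,k̄} = {0},
    Z_{f,k+1} = Z_{f,k} ⊕ A_K^{N_k−1} W and N strictly decreasing on [k̄, m],
    Z_{f,k} ⊕ W ⊆ S(N̄) for every k̄ < k ≤ m, where N̄ = N k̄ and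
    S(j) = Σ_{i=0}^{j−1} A_K^i W. -/
theorem terminal_set_containment {n : ℕ}
    (A_K : (Fin n → ℝ) →ₗ[ℝ] (Fin n → ℝ))
    (W : Set (Fin n → ℝ)) (hW0 : (0 : Fin n → ℝ) ∈ W)
    (S : ℕ → Set (Fin n → ℝ))
    (hS0 : S 0 = {0})
    (hSrec : ∀ j, S (j + 1) = S j + (A_K ^ j) '' W)
    (Z : ℕ → Set (Fin n → ℝ)) (Nseq : ℕ → ℕ) (kbar m : ℕ)
    (hNpos : ∀ i, 0 < Nseq i)
    (hZ0 : Z kbar = {0})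
    (hZrec : ∀ k, kbar ≤ k → k < m → Z (k + 1) = Z k + (A_K ^ (Nseq k - 1)) '' W)
    (hNdec : ∀ i, kbar ≤ i → i < m → Nseq (i + 1) < Nseq i) :
    ∀ k, kbar < k → k ≤ m → Z k + W ⊆ S (Nseq kbar) := by
  have h0img : ∀ j : ℕ, (0 : Fin n → ℝ) ∈ (A_K ^ j) '' W := fun j => ⟨0, hW0, map_zero _⟩
  have hSmono : ∀ j j' : ℕ, j ≤ j' → S j ⊆ S j' := by
    intro j j' h
    induction j' with
    | zero => simp [Nat.le_zero.mp h]
    | succ j' ih =>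
      rcases Nat.lt_or_ge j (j' + 1) with h' | h'
      · intro x hx
        rw [hSrec j']
        exact ⟨x, ih (Nat.lt_succ_iff.mp h') hx, 0, h0img j', by simp⟩
      · have : j = j' + 1 := le_antisymm h h'
        subst this; exact subset_rfl
  have key : ∀ k, kbar ≤ k → k ≤ m → Z k + S (Nseq k) ⊆ S (Nseq kbar) := by
    intro k
    induction k with
    | zero =>
      intro h1 _
      have hk0 : kbar = 0 := Nat.le_zero.mp h1
      subst hk0
      rw [hZ0]
      rw [Set.singleton_zero, zero_add]
    | succ k ih =>
      intro h1 h2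
      rcases Nat.lt_or_ge kbar (k + 1) with h' | h'
      · have hk : kbar ≤ k := Nat.lt_succ_iff.mp h'
        have hkm : k < m := h2
        rw [hZrec k hk hkm]
        have hNk : Nseq (k + 1) ≤ Nseq k - 1 := Nat.le_sub_one_of_lt (hNdec k hk hkm)
        calc Z k + (A_K ^ (Nseq k - 1)) '' W + S (Nseq (k + 1))
            ⊆ Z k + (A_K ^ (Nseq k - 1)) '' W + S (Nseq k - 1) :=
              Set.add_subset_add subset_rfl (hSmono _ _ hNk)
          _ = Z k + (S (Nseq k - 1) + (A_K ^ (Nseq k - 1)) '' W) := by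
              rw [add_assoc, add_comm ((A_K ^ (Nseq k - 1)) '' W)]
          _ = Z k + S (Nseq k) := by
              rw [← hSrec (Nseq k - 1), Nat.sub_add_cancel (hNpos k)]
          _ ⊆ S (Nseq kbar) := ih hk (le_of_lt hkm)
      · have : kbar = k + 1 := le_antisymm h1 h'
        subst this
        rw [hZ0, Set.singleton_zero, zero_add]
  intro k hk hkm
  have hWsub : W ⊆ S (Nseq k) := by
    have h1 : S 1 = W := by
      rw [hSrec 0, hS0, pow_zero]
      simp [Set.singleton_zero, Set.image_id]
    calc W = S 1 := h1.symm
      _ ⊆ S (Nseq k) := hSmono _ _ (hNpos k)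
  exact (Set.add_subset_add subset_rfl hWsub).trans (key k (le_of_lt hk) hkm)
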